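/- For arbitrary (not necessarily closed) semimodules X₁, X₂ ⊆ ℝ_max^n, the inclusion X₁^⊥ ⊕ X₂^⊥ ⊆ (X₁ ∩ X₂)^⊥ always holds; moreover, the inclusion can be strict: for X₁ = {x ∈ ℝ_max² : x₁ = x₂} and X₂ = {x ∈ ℝ_max² : x₁ > x₂} ∪ {(-∞,-∞)}, one has X₁^⊥ ⊕ X₂^⊥ = X₁^⊥ ⊊ (ℝ_max²)² = (X₁ ∩ X₂)^⊥. -/

import Mathlib

/-!
Max-plus (tropical) framework.

The max-plus semiring `ℝ_max = ℝ ∪ {-∞}` is modelled as `WithBot ℝ`: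
max-plus addition `a ⊕ b = max a b` is the lattice `⊔`, and max-plus
multiplication `a ⊙ b = a + b` is `+` (with `⊥ = -∞` absorbing).
The topology induced by the metric `d(a,b) = |exp a - exp b|` is the
order topology.
-/

/-- The max-plus semiring `ℝ ∪ {-∞}`. -/
abbrev Rmax : Type := WithBot ℝ

/-- The topology of `ℝ_max` (the order topology, which coincides with the
topology induced by the metric `d(a,b) = |exp a - exp b|`). -/
instance : TopologicalSpace Rmax := Preorder.topology Rmax

instance : OrderTopology Rmax := ⟨rfl⟩

/-- Vectors with entries in a (max-plus-like) semiring `R`. -/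
abbrev Vec (R : Type*) (n : ℕ) := Fin n → R

section Defs

variable {R : Type*} [LinearOrder R] [Add R] [OrderBot R]

/-- Max-plus scalar action on a vector: `(λ x)_i = λ ⊙ x_i = λ + x_i`. -/
def sm {n : ℕ} (lam : R) (x : Vec R n) : Vec R n := fun i => lam + x i

/-- Max-plus matrix-vector product: `(A x)_i = ⊕_k A_{ik} ⊙ x_k = max_k (A_{ik} + x_k)`. -/
def mulVecMP {m n : ℕ} (A : Matrix (Fin m) (Fin n) R) (x : Vec R n) : Vec R m :=
  fun i => Finset.univ.sup fun k => A i k + x k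

/-- A subsemimodule (max-plus cone) of `R^n`: a subset stable under
max-plus linear combinations `λ x ⊕ μ y`. -/
def IsSemimodule {n : ℕ} (K : Set (Vec R n)) : Prop :=
  ∀ x ∈ K, ∀ y ∈ K, ∀ lam mu : R, (sm lam x ⊔ sm mu y) ∈ K

/-- Max-plus scalar action on a pair of vectors. -/
def smP {n : ℕ} (lam : R) (p : Vec R n × Vec R n) : Vec R n × Vec R n :=
  (sm lam p.1, sm lam p.2)

/-- A subsemimodule of `(R^n)²`. -/
def IsPairSemimodule {n : ℕ} (W : Set (Vec R n × Vec R n)) : Prop :=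
  ∀ p ∈ W, ∀ q ∈ W, ∀ lam mu : R, (smP lam p ⊔ smP mu q) ∈ W

/-- A congruence on `R^n`: an equivalence relation which is a
subsemimodule of `(R^n)²`. -/
def IsCongruence {n : ℕ} (W : Set (Vec R n × Vec R n)) : Prop :=
  Equivalence (fun x y => (x, y) ∈ W) ∧ IsPairSemimodule W

/-- The (max-plus) kernel of a matrix: `ker E = {(x,y) : E x = E y}`. -/
def kerM {p n : ℕ} (E : Matrix (Fin p) (Fin n) R) : Set (Vec R n × Vec R n) :=
  {w | mulVecMP E w.1 = mulVecMP E w.2}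

/-- The image of a matrix: `Im E = {E x}`. -/
def imM {n q : ℕ} (E : Matrix (Fin n) (Fin q) R) : Set (Vec R n) :=
  {y | ∃ x : Vec R q, y = mulVecMP E x}

/-- `A W = {(A x, A y) : (x,y) ∈ W}` for a set of pairs `W`. -/
def mapCong {n : ℕ} (A : Matrix (Fin n) (Fin n) R) (W : Set (Vec R n × Vec R n)) :
    Set (Vec R n × Vec R n) :=
  {p | ∃ w ∈ W, p = (mulVecMP A w.1, mulVecMP A w.2)}

/-- `A S = {A x : x ∈ S}`. -/
def mapSet {n : ℕ} (A : Matrix (Fin n) (Fin n) R) (S : Set (Vec R n)) : Set (Vec R n) :=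
  {y | ∃ x ∈ S, y = mulVecMP A x}

/-- `A⁻¹ S = {x : A x ∈ S}`. -/
def invSet {n : ℕ} (A : Matrix (Fin n) (Fin n) R) (S : Set (Vec R n)) : Set (Vec R n) :=
  {x | mulVecMP A x ∈ S}

/-- `A⁻¹ U = {(x,y) : (A x, A y) ∈ U}` for a set of pairs `U`. -/
def invPair {n : ℕ} (A : Matrix (Fin n) (Fin n) R) (U : Set (Vec R n × Vec R n)) :
    Set (Vec R n × Vec R n) :=
  {p | (mulVecMP A p.1, mulVecMP A p.2) ∈ U}

/-- The max-plus sum of two subsets of `R^n`: `X ⊕ Y = {x ⊕ y : x ∈ X, y ∈ Y}`. -/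
def setSum {n : ℕ} (X Y : Set (Vec R n)) : Set (Vec R n) :=
  {z | ∃ x ∈ X, ∃ y ∈ Y, z = x ⊔ y}

/-- The max-plus sum of two subsets of `(R^n)²`. -/
def pairSum {n : ℕ} (X Y : Set (Vec R n × Vec R n)) : Set (Vec R n × Vec R n) :=
  {z | ∃ x ∈ X, ∃ y ∈ Y, z = x ⊔ y}

/-- `W` is `(C,A)`-conditioned invariant: `A (W ∩ ker C) ⊆ W`. -/
def CondInv {n q : ℕ} (C : Matrix (Fin q) (Fin n) R) (A : Matrix (Fin n) (Fin n) R)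
    (W : Set (Vec R n × Vec R n)) : Prop :=
  mapCong A (W ∩ kerM C) ⊆ W

/-- `X` is `(A,B)`-controlled invariant: `A X ⊆ X ⊕ Im B`. -/
def ContrInv {n q : ℕ} (A : Matrix (Fin n) (Fin n) R) (B : Matrix (Fin n) (Fin q) R)
    (X : Set (Vec R n)) : Prop :=
  mapSet A X ⊆ setSum X (imM B)

/-- The max-plus scalar product `uᵗ v = ⊕_i u_i ⊙ v_i = max_i (u_i + v_i)`. -/
def dotMP {n : ℕ} (u v : Vec R n) : R := Finset.univ.sup fun i => u i + v i

/-- The orthogonal of a semimodule `X ⊆ R^n`: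
`X^⊥ = {(x,y) : xᵗ z = yᵗ z, ∀ z ∈ X}`. -/
def orthS {n : ℕ} (X : Set (Vec R n)) : Set (Vec R n × Vec R n) :=
  {p | ∀ z ∈ X, dotMP p.1 z = dotMP p.2 z}

/-- The orthogonal of a congruence (or set of pairs) `W ⊆ (R^n)²`:
`W^⊤ = {z : xᵗ z = yᵗ z, ∀ (x,y) ∈ W}`. -/
def orthC {n : ℕ} (W : Set (Vec R n × Vec R n)) : Set (Vec R n) :=
  {z | ∀ p ∈ W, dotMP p.1 z = dotMP p.2 z}

/-- The smallest congruence containing a set `S ⊆ (R^n)²`. -/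
def spanCong {n : ℕ} (S : Set (Vec R n × Vec R n)) : Set (Vec R n × Vec R n) :=
  ⋂₀ {W | IsCongruence W ∧ S ⊆ W}

/-- The smallest semimodule containing a set `S ⊆ R^n`. -/
def spanSet {n : ℕ} (S : Set (Vec R n)) : Set (Vec R n) :=
  ⋂₀ {K | IsSemimodule K ∧ S ⊆ K}

end Defs


private lemma sup2 (f : Fin 2 → Rmax) : Finset.univ.sup f = f 0 ⊔ f 1 := by
  rw [show (Finset.univ : Finset (Fin 2)) = {0,1} from rfl]
  simp [Finset.sup_insert]

private lemma neg_eps_le (a : Rmax) (ε : ℝ) (hε : 0 < ε) : a + ↑(-ε) ≤ a := by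
  have h0 : ((-ε:ℝ):Rmax) ≤ (0:Rmax) := by exact_mod_cast (by linarith : (-ε:ℝ) ≤ 0)
  calc a + ↑(-ε) ≤ a + 0 := add_le_add_right h0 a
  _ = a := add_zero a

private lemma le_of_forall_eps (b m : Rmax) (h : ∀ ε : ℝ, 0 < ε → b + ↑(-ε) ≤ m) : b ≤ m := by
  cases b with
  | none => exact bot_le
  | some r =>
    cases m with
    | none =>
      have h1 : ((r + -1 : ℝ) : Rmax) ≤ (⊥ : Rmax) := by
        rw [WithBot.coe_add]; exact h 1 one_pos
      exact absurd h1 (by simp)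
    | some s =>
      have h' : ∀ ε : ℝ, 0 < ε → r + -ε ≤ s := by
        intro ε hε
        have h1 : ((r + -ε : ℝ) : Rmax) ≤ ((s : ℝ) : Rmax) := by
          rw [WithBot.coe_add]; exact h ε hε
        exact_mod_cast h1
      have hrs : r ≤ s := le_of_forall_pos_le_add (fun ε hε => by linarith [h' ε hε])
      exact WithBot.coe_le_coe.2 hrs

private lemma key_lemma (a b c d : Rmax)
    (h : ∀ ε : ℝ, 0 < ε → a ⊔ (b + ↑(-ε)) = c ⊔ (d + ↑(-ε))) : a ⊔ b = c ⊔ d := by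
  have half : ∀ a b c d : Rmax,
      (∀ ε : ℝ, 0 < ε → a ⊔ (b + ↑(-ε)) = c ⊔ (d + ↑(-ε))) → a ⊔ b ≤ c ⊔ d := by
    intro a b c d h
    refine sup_le ?_ (le_of_forall_eps _ _ ?_)
    · calc a ≤ a ⊔ (b + ↑(-(1:ℝ))) := le_sup_left
        _ = c ⊔ (d + ↑(-(1:ℝ))) := h 1 one_pos
        _ ≤ c ⊔ d := sup_le_sup_left (neg_eps_le d 1 one_pos) c
    · intro ε hε
      calc b + ↑(-ε) ≤ a ⊔ (b + ↑(-ε)) := le_sup_right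
        _ = c ⊔ (d + ↑(-ε)) := h ε hε
        _ ≤ c ⊔ d := sup_le_sup_left (neg_eps_le d ε hε) c
  exact le_antisymm (half a b c d h) (half c d a b (fun ε hε => (h ε hε).symm))

private lemma dot_sup {n : ℕ} (u v z : Vec Rmax n) :
    dotMP (u ⊔ v) z = dotMP u z ⊔ dotMP v z := by
  unfold dotMP
  apply le_antisymm
  · apply Finset.sup_le
    intro i _
    have h1 : (u ⊔ v) i + z i = (u i + z i) ⊔ (v i + z i) := (max_add_add_right _ _ _).symm
    rw [h1]
    exact sup_le_sup (Finset.le_sup (f := fun i => u i + z i) (Finset.mem_univ i))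
      (Finset.le_sup (f := fun i => v i + z i) (Finset.mem_univ i))
  · apply sup_le <;>
    · apply Finset.sup_le
      intro i _
      refine le_trans ?_ (Finset.le_sup (f := fun i => (u ⊔ v) i + z i) (Finset.mem_univ i))
      show _ ≤ (u ⊔ v) i + z i
      have h1 : (u ⊔ v) i + z i = (u i + z i) ⊔ (v i + z i) := (max_add_add_right _ _ _).symm
      rw [h1]
      first | exact le_sup_left | exact le_sup_right

private lemma dot_botv {n : ℕ} (u : Vec Rmax n) : dotMP u (fun _ => (⊥ : Rmax)) = ⊥ := by
  unfold dotMP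
  simp

private lemma botv_dot {n : ℕ} (u : Vec Rmax n) : dotMP (fun _ => (⊥ : Rmax)) u = ⊥ := by
  unfold dotMP
  simp

private lemma orth_anti {n : ℕ} {X Y : Set (Vec Rmax n)} (h : X ⊆ Y) : orthS Y ⊆ orthS X :=
  fun _ hp z hz => hp z (h hz)

private lemma orth_sup {n : ℕ} {X : Set (Vec Rmax n)} {p q : Vec Rmax n × Vec Rmax n}
    (hp : p ∈ orthS X) (hq : q ∈ orthS X) : p ⊔ q ∈ orthS X := by
  intro z hz
  show dotMP (p.1 ⊔ q.1) z = dotMP (p.2 ⊔ q.2) z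
  rw [dot_sup, dot_sup, hp z hz, hq z hz]

private lemma orth2_sub_orth1 :
    orthS ({x | x 1 < x 0} ∪ {fun _ => (⊥ : Rmax)} : Set (Vec Rmax 2)) ⊆
      orthS ({x | x 0 = x 1} : Set (Vec Rmax 2)) := by
  intro p hp z hz
  have hz01 : z 0 = z 1 := hz
  cases hw : z 0 with
  | none =>
    have hwb : z 0 = (⊥ : Rmax) := hw
    have h1 : z 1 = (⊥ : Rmax) := by rw [← hz01]; exact hw
    show dotMP p.1 z = dotMP p.2 z
    unfold dotMP
    rw [sup2, sup2, hwb, h1]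
    simp
  | some c =>
    have hwc : z 0 = ((c : ℝ) : Rmax) := hw
    have h1 : z 1 = ((c : ℝ) : Rmax) := by rw [← hz01]; exact hw
    show dotMP p.1 z = dotMP p.2 z
    unfold dotMP
    rw [sup2, sup2, hwc, h1]
    apply key_lemma
    intro ε hε
    have hmem : ![(↑c : Rmax), ↑(c + -ε)] ∈
        ({x | x 1 < x 0} ∪ {fun _ => (⊥ : Rmax)} : Set (Vec Rmax 2)) := by
      left
      show (↑(c + -ε) : Rmax) < ↑c
      exact_mod_cast (by linarith : c + -ε < c)
    have hd := hp _ hmem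
    unfold dotMP at hd
    rw [sup2, sup2] at hd
    simp only [Matrix.cons_val_zero, Matrix.cons_val_one, Matrix.head_cons] at hd
    rw [show ((c + -ε : ℝ) : Rmax) = (↑c + ↑(-ε) : Rmax) from WithBot.coe_add _ _] at hd
    rw [← add_assoc, ← add_assoc] at hd
    exact hd

/-- For arbitrary semimodules `X₁, X₂ ⊆ ℝ_max^n` one always
has `X₁^⊥ ⊕ X₂^⊥ ⊆ (X₁ ∩ X₂)^⊥`, and the inclusion can be strict: for
`X₁ = {x ∈ ℝ_max² : x₁ = x₂}` and
`X₂ = {x ∈ ℝ_max² : x₁ > x₂} ∪ {(-∞,-∞)}` one has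
`X₁^⊥ ⊕ X₂^⊥ = X₁^⊥ ⊊ (ℝ_max²)² = (X₁ ∩ X₂)^⊥`. -/
theorem orthogonal_of_intersection_strict
    {n : ℕ} :
    (∀ X₁ X₂ : Set (Vec Rmax n), IsSemimodule X₁ → IsSemimodule X₂ →
      pairSum (orthS X₁) (orthS X₂) ⊆ orthS (X₁ ∩ X₂)) ∧
    (let X₁ : Set (Vec Rmax 2) := {x | x 0 = x 1}
     let X₂ : Set (Vec Rmax 2) := {x | x 1 < x 0} ∪ {fun _ => (⊥ : Rmax)}
     pairSum (orthS X₁) (orthS X₂) = orthS X₁ ∧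
     orthS X₁ ⊂ (Set.univ : Set (Vec Rmax 2 × Vec Rmax 2)) ∧
     orthS (X₁ ∩ X₂) = (Set.univ : Set (Vec Rmax 2 × Vec Rmax 2))) := by
  constructor
  · intro X₁ X₂ _ _ p hp
    obtain ⟨x, hx, y, hy, rfl⟩ := hp
    exact orth_sup (orth_anti Set.inter_subset_left hx) (orth_anti Set.inter_subset_right hy)
  · refine ⟨?_, ?_, ?_⟩
    · apply Set.Subset.antisymm
      · rintro p ⟨x, hx, y, hy, rfl⟩
        exact orth_sup hx (orth2_sub_orth1 hy)
      · intro x hx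
        refine ⟨x, hx, ((fun _ => ⊥, fun _ => ⊥) : Vec Rmax 2 × Vec Rmax 2), ?_, ?_⟩
        · intro z _
          show dotMP (fun _ => (⊥ : Rmax)) z = dotMP (fun _ => (⊥ : Rmax)) z
          rfl
        · exact (sup_eq_left.2 bot_le).symm
    · refine (Set.ssubset_univ_iff).2 fun heq => ?_
      have hm : (![(0 : Rmax), ⊥], ![(⊥ : Rmax), ⊥]) ∈
          orthS ({x | x 0 = x 1} : Set (Vec Rmax 2)) := heq ▸ Set.mem_univ _
      have hd := hm (fun _ => (0 : Rmax)) rfl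
      unfold dotMP at hd
      rw [sup2, sup2] at hd
      simp at hd
    · apply Set.eq_univ_iff_forall.2
      intro p z hz
      obtain ⟨h1, h2⟩ := hz
      rcases h2 with h2 | h2
      · have h1' : z 0 = z 1 := h1
        have h2' : z 1 < z 0 := h2
        rw [h1'] at h2'
        exact absurd h2' (lt_irrefl _)
      · have hzb : z = fun _ => (⊥ : Rmax) := h2
        rw [hzb, dot_botv, dot_botv]
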